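/- Let $g : (0,\infty) \to (0,\infty)$ be a nonincreasing function such that $1/g$ is concave, and let $x, y > 0$ with $0 < s \le y/x \le t$, $\alpha \in [0,1]$. Then $g(x^{1-\alpha} y^{\alpha}) \le \max\{K(s)^R, K(t)^R\} \, g(x)^{1-\alpha} g(y)^{\alpha}$, where $K(u) = (u+1)^2/(4u)$ and $R = \max\{\alpha, 1-\alpha\}$. -/

import Mathlib

open Real Set Filter

lemma young_core (α : ℝ) (h0 : 0 ≤ α) (h12 : α ≤ 1/2) (h : ℝ) (hh : 0 < h) :
    (1 - α) + α * h ≤ ((h + 1)^2 / (4 * h)) ^ (1 - α) * h ^ α := by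
  set F : ℝ → ℝ := fun z =>
    Real.log ((1 - α) + α * z) + (1 - 2*α) * Real.log z
      - 2*(1 - α) * Real.log (z + 1) + (1 - α) * Real.log 4 with hF
  have hApos : ∀ z : ℝ, 0 < z → 0 < (1 - α) + α * z := by
    intro z hz; nlinarith
  have hderiv : ∀ z : ℝ, 0 < z → HasDerivAt F
      (α / ((1 - α) + α * z) + (1 - 2*α) / z - 2*(1 - α) / (z + 1)) z := by
    intro z hz
    have h1 : HasDerivAt (fun w : ℝ => (1 - α) + α * w) α z := by
      simpa using ((hasDerivAt_id z).const_mul α).const_add (1 - α)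
    have h1' : HasDerivAt (fun w : ℝ => Real.log ((1 - α) + α * w))
        (α / ((1 - α) + α * z)) z := h1.log (ne_of_gt (hApos z hz))
    have h2 : HasDerivAt (fun w : ℝ => (1 - 2*α) * Real.log w)
        ((1 - 2*α) / z) z := by
      simpa [mul_one_div, div_eq_mul_inv] using (Real.hasDerivAt_log (ne_of_gt hz)).const_mul (1 - 2*α)
    have h3 : HasDerivAt (fun w : ℝ => w + 1) 1 z := (hasDerivAt_id z).add_const 1
    have h3' : HasDerivAt (fun w : ℝ => 2*(1 - α) * Real.log (w + 1))
        (2*(1 - α) / (z + 1)) z := by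
      have := (h3.log (by positivity)).const_mul (2*(1 - α))
      simpa [mul_one_div, div_eq_mul_inv] using this
    simpa [hF] using ((h1'.add h2).sub h3').add_const ((1 - α) * Real.log 4)
  have hF1 : F 1 = 0 := by
    have : Real.log 4 = 2 * Real.log 2 := by
      rw [show (4:ℝ) = 2^2 by norm_num, Real.log_pow]; push_cast; ring
    simp only [hF]
    rw [show (1:ℝ) - α + α * 1 = 1 by ring, show (1:ℝ) + 1 = 2 by norm_num,
      Real.log_one, this]
    ring
  have key : F h ≤ 0 := by
    rcases le_total h 1 with hle | hge
    · have hmono : MonotoneOn F (Icc h 1) := by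
        apply monotoneOn_of_deriv_nonneg (convex_Icc h 1)
        · intro z hz
          exact (hderiv z (lt_of_lt_of_le hh hz.1)).continuousAt.continuousWithinAt
        · intro z hz
          rw [interior_Icc] at hz
          exact (hderiv z (lt_of_lt_of_le hh hz.1.le)).differentiableAt.differentiableWithinAt
        · intro z hz
          rw [interior_Icc] at hz
          have hz0 : 0 < z := lt_of_lt_of_le hh hz.1.le
          rw [(hderiv z hz0).deriv]
          have hz1 : z < 1 := hz.2
          have hA := hApos z hz0
          have heq : α / ((1 - α) + α * z) + (1 - 2*α) / z - 2*(1 - α) / (z + 1)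
              = ((1 - α) * (1 - 2*α) * (1 - z)) / (((1 - α) + α * z) * z * (z + 1)) := by
            field_simp
            ring
          rw [heq]
          apply div_nonneg
          · have h1 : (0:ℝ) ≤ (1 - α) * (1 - 2*α) := by nlinarith
            exact mul_nonneg h1 (by linarith)
          · positivity
      have := hmono (left_mem_Icc.2 hle) (right_mem_Icc.2 hle) hle
      rwa [hF1] at this
    · have hmono : AntitoneOn F (Icc 1 h) := by
        apply antitoneOn_of_deriv_nonpos (convex_Icc 1 h)
        · intro z hz
          exact (hderiv z (lt_of_lt_of_le one_pos hz.1)).continuousAt.continuousWithinAt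
        · intro z hz
          rw [interior_Icc] at hz
          exact (hderiv z (lt_of_lt_of_le one_pos hz.1.le)).differentiableAt.differentiableWithinAt
        · intro z hz
          rw [interior_Icc] at hz
          have hz0 : (0:ℝ) < z := lt_trans one_pos hz.1
          rw [(hderiv z hz0).deriv]
          have hA := hApos z hz0
          have heq : α / ((1 - α) + α * z) + (1 - 2*α) / z - 2*(1 - α) / (z + 1)
              = ((1 - α) * (1 - 2*α) * (1 - z)) / (((1 - α) + α * z) * z * (z + 1)) := by
            field_simp
            ring
          rw [heq]
          apply div_nonpos_of_nonpos_of_nonneg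
          · have h1 : (0:ℝ) ≤ (1 - α) * (1 - 2*α) := by nlinarith
            exact mul_nonpos_of_nonneg_of_nonpos h1 (by nlinarith [hz.1])
          · positivity
      have := hmono (left_mem_Icc.2 hge) (right_mem_Icc.2 hge) hge
      rwa [hF1] at this
  -- now exponentiate
  have hA := hApos h hh
  have hK : (0:ℝ) < (h + 1)^2 / (4 * h) := by positivity
  have hlog : Real.log ((1 - α) + α * h)
      ≤ Real.log ((h + 1)^2 / (4 * h)) * (1 - α) + Real.log h * α := by
    have hlogK : Real.log ((h + 1)^2 / (4 * h))
        = 2 * Real.log (h + 1) - (Real.log 4 + Real.log h) := by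
      rw [Real.log_div (by positivity) (by positivity), Real.log_pow,
        Real.log_mul (by norm_num) (ne_of_gt hh)]
      push_cast; ring
    rw [hlogK]
    have := key
    simp only [hF] at this
    nlinarith [this]
  calc (1 - α) + α * h = Real.exp (Real.log ((1 - α) + α * h)) := (Real.exp_log hA).symm
    _ ≤ Real.exp (Real.log ((h + 1)^2 / (4 * h)) * (1 - α) + Real.log h * α) :=
        Real.exp_le_exp.2 hlog
    _ = ((h + 1)^2 / (4 * h)) ^ (1 - α) * h ^ α := by
        rw [Real.exp_add, Real.rpow_def_of_pos hK, Real.rpow_def_of_pos hh]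
lemma young_rev (α : ℝ) (h0 : 0 ≤ α) (h1 : α ≤ 1) (h : ℝ) (hh : 0 < h) :
    (1 - α) + α * h ≤ ((h + 1)^2 / (4 * h)) ^ (max α (1 - α)) * h ^ α := by
  rcases le_total α (1/2) with hle | hge
  · rw [max_eq_right (by linarith : α ≤ 1 - α)]
    exact young_core α h0 hle h hh
  · rw [max_eq_left (by linarith : 1 - α ≤ α)]
    have hinv : (0:ℝ) < 1 / h := by positivity
    have key := young_core (1 - α) (by linarith) (by linarith) (1/h) hinv
    have hKeq : ((1/h + 1)^2 / (4 * (1/h))) = ((h + 1)^2 / (4 * h)) := by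
      field_simp
      ring
    rw [hKeq] at key
    -- key : (1 - (1-α)) + (1-α) * (1/h) ≤ K ^ (1 - (1-α)) * (1/h) ^ (1-α)
    have e1 : (1 : ℝ) - (1 - α) = α := by ring
    rw [e1] at key
    have hK : (0:ℝ) < (h + 1)^2 / (4 * h) := by positivity
    -- multiply by h
    have hpow : (1/h : ℝ) ^ (1 - α) * h = h ^ α := by
      rw [one_div, Real.inv_rpow hh.le, ← Real.rpow_neg hh.le,
        ← Real.rpow_add_one (ne_of_gt hh)]
      ring_nf
    calc (1 - α) + α * h = (α + (1 - α) * (1/h)) * h := by field_simp; ring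
      _ ≤ (((h + 1)^2 / (4 * h)) ^ α * (1/h) ^ (1 - α)) * h := by
          apply mul_le_mul_of_nonneg_right key hh.le
      _ = ((h + 1)^2 / (4 * h)) ^ α * h ^ α := by rw [mul_assoc, hpow]

lemma concave_superhom {φ : ℝ → ℝ} (hconc : ConcaveOn ℝ (Set.Ioi 0) φ)
    (hnn : ∀ z ∈ Set.Ioi (0:ℝ), 0 ≤ φ z) {p q : ℝ} (hp : 0 < p) (hpq : p ≤ q) :
    (p / q) * φ q ≤ φ p := by
  have hq : 0 < q := lt_of_lt_of_le hp hpq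
  have hev : ∀ ε ∈ Ioo (0:ℝ) p, (p - ε) / (q - ε) * φ q ≤ φ p := by
    intro ε hε
    have hqε : 0 < q - ε := by linarith [hε.2]
    set θ := (p - ε) / (q - ε) with hθ
    have hθ0 : 0 ≤ θ := div_nonneg (by linarith [hε.2]) hqε.le
    have hθ1 : θ ≤ 1 := (div_le_one hqε).2 (by linarith)
    have hcomb := hconc.2 (mem_Ioi.2 hq) (mem_Ioi.2 hε.1) hθ0 (by linarith : (0:ℝ) ≤ 1 - θ) (by ring)
    have hmul : θ * (q - ε) = p - ε := div_mul_cancel₀ _ (ne_of_gt hqε)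
    have heq : θ * q + (1 - θ) * ε = p := by nlinarith [hmul]
    simp only [smul_eq_mul] at hcomb
    rw [heq] at hcomb
    have := hnn ε (mem_Ioi.2 hε.1)
    nlinarith [hcomb]
  have hcont : ContinuousAt (fun ε : ℝ => (p - ε) / (q - ε) * φ q) 0 := by
    apply ContinuousAt.mul _ continuousAt_const
    exact ContinuousAt.div (by fun_prop) (by fun_prop) (by simpa using ne_of_gt hq)
  have hlim : Tendsto (fun ε : ℝ => (p - ε) / (q - ε) * φ q) (nhdsWithin 0 (Ioi 0))
      (nhds ((p / q) * φ q)) := by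
    have h0 : (p - 0) / (q - 0) * φ q = (p / q) * φ q := by norm_num
    exact h0 ▸ hcont.tendsto.mono_left nhdsWithin_le_nhds
  exact le_of_tendsto hlim
    (eventually_of_mem (Ioo_mem_nhdsGT_of_mem ⟨le_refl 0, hp⟩) hev)

lemma aux_main (g : ℝ → ℝ) (hmono : AntitoneOn g (Set.Ioi 0))
    (hpos : ∀ x ∈ Set.Ioi (0:ℝ), 0 < g x)
    (hconc : ConcaveOn ℝ (Set.Ioi 0) (fun x => 1 / g x))
    (x y s t α : ℝ) (hx : 0 < x) (hy : 0 < y) (hs : 0 < s) (hst : s ≤ t)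
    (h1 : s ≤ y / x) (h2 : y / x ≤ t) (hα : α ∈ Set.Icc (0:ℝ) 1) :
    g (x ^ (1 - α) * y ^ α) ≤
      max (((s + 1)^2 / (4 * s)) ^ max α (1 - α)) (((t + 1)^2 / (4 * t)) ^ max α (1 - α)) *
        (g x ^ (1 - α) * g y ^ α) := by
  obtain ⟨hα0, hα1⟩ := hα
  have ht : 0 < t := lt_of_lt_of_le hs hst
  have hu : 0 < y / x := div_pos hy hx
  set R := max α (1 - α) with hR
  have hR0 : (0:ℝ) ≤ R := le_trans hα0 (le_max_left _ _)
  set lam := max (((s + 1)^2 / (4 * s)) ^ R) (((t + 1)^2 / (4 * t)) ^ R) with hlam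
  have hKs1 : (1:ℝ) ≤ (s + 1)^2 / (4 * s) := by
    rw [le_div_iff₀ (by positivity)]; nlinarith [sq_nonneg (s - 1)]
  have hlam1 : (1:ℝ) ≤ lam :=
    le_trans (Real.one_le_rpow hKs1 hR0) (le_max_left _ _)
  have hlam0 : (0:ℝ) < lam := lt_of_lt_of_le one_pos hlam1
  -- K(y/x)^R ≤ lam
  have hKu_le : ((y / x + 1)^2 / (4 * (y / x))) ^ R ≤ lam := by
    rcases le_total (y / x) 1 with hle | hge
    · refine le_trans (le_trans (Real.rpow_le_rpow (by positivity) ?_ hR0)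
        (le_refl _)) (le_max_left _ _)
      rw [div_le_div_iff₀ (by positivity) (by positivity)]
      have hus : (y / x) * s ≤ 1 := by nlinarith [h1, hle, hs.le, hu.le]
      nlinarith [mul_nonneg (sub_nonneg.2 h1) (sub_nonneg.2 hus)]
    · refine le_trans (Real.rpow_le_rpow (by positivity) ?_ hR0) (le_max_right _ _)
      rw [div_le_div_iff₀ (by positivity) (by positivity)]
      have hut : (1:ℝ) ≤ (y / x) * t := by nlinarith [h2, hge, ht.le]
      nlinarith [mul_nonneg (sub_nonneg.2 h2) (sub_nonneg.2 hut)]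
  -- reverse Young at h = y/x, scaled by x
  set z := x ^ (1 - α) * y ^ α with hz'
  have hz : 0 < z := by positivity
  have hyoung := young_rev α hα0 hα1 (y / x) hu
  have hxx : x ^ (1 - α) * x ^ α = x := by
    rw [← Real.rpow_add hx]; norm_num
  have hux : (y / x) ^ α * x = z := by
    rw [Real.div_rpow hy.le hx.le, hz', div_mul_eq_mul_div,
      div_eq_iff (ne_of_gt (Real.rpow_pos_of_pos hx α))]
    linear_combination (-(y ^ α)) * hxx
  set m := (1 - α) * x + α * y with hm'
  have hm_le : m ≤ lam * z := by
    have := mul_le_mul_of_nonneg_right hyoung hx.le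
    have hL : ((1 - α) + α * (y / x)) * x = m := by
      rw [hm']; field_simp
    rw [hL, mul_assoc, hux] at this
    exact le_trans this (mul_le_mul_of_nonneg_right hKu_le hz.le)
  have hz_le_m : z ≤ m :=
    Real.geom_mean_le_arith_mean2_weighted (by linarith) hα0 hx.le hy.le (by ring)
  have hm : 0 < m := lt_of_lt_of_le hz hz_le_m
  have h_mdiv_pos : 0 < m / lam := div_pos hm hlam0
  have h_mdiv_le : m / lam ≤ z := (div_le_iff₀ hlam0).2 (by rw [mul_comm]; exact hm_le)
  -- step 1 : antitone
  have step1 : g z ≤ g (m / lam) :=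
    hmono (mem_Ioi.2 h_mdiv_pos) (mem_Ioi.2 hz) h_mdiv_le
  -- step 2 : superhomogeneity
  have hgm : 0 < g m := hpos m (mem_Ioi.2 hm)
  have hgdiv : 0 < g (m / lam) := hpos _ (mem_Ioi.2 h_mdiv_pos)
  have step2 : g (m / lam) ≤ lam * g m := by
    have hsup := concave_superhom hconc
      (fun w hw => le_of_lt (by simpa using (one_div_pos.2 (hpos w hw))))
      h_mdiv_pos (div_le_self hm.le hlam1)
    have hrw : (m / lam) / m = 1 / lam := by
      rw [div_right_comm, div_self (ne_of_gt hm)]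
    rw [hrw] at hsup
    have h' : 1 / (lam * g m) ≤ 1 / g (m / lam) := by
      rw [one_div_mul_one_div] at hsup; exact hsup
    have := (one_div_le_one_div (by positivity) hgdiv).1 h'
    linarith
  -- step 3 : log-convexity bound
  have hgx : 0 < g x := hpos x (mem_Ioi.2 hx)
  have hgy : 0 < g y := hpos y (mem_Ioi.2 hy)
  have step3 : g m ≤ g x ^ (1 - α) * g y ^ α := by
    have hcomb := hconc.2 (mem_Ioi.2 hx) (mem_Ioi.2 hy) (by linarith : (0:ℝ) ≤ 1 - α)
      hα0 (by ring)
    simp only [smul_eq_mul] at hcomb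
    have hgm' : (1 / g x) ^ (1 - α) * (1 / g y) ^ α ≤ 1 / g m := by
      refine le_trans (Real.geom_mean_le_arith_mean2_weighted (by linarith) hα0
        (by positivity) (by positivity) (by ring)) ?_
      exact hcomb
    rw [Real.div_rpow (by norm_num) hgx.le, Real.div_rpow (by norm_num) hgy.le,
      Real.one_rpow, Real.one_rpow, one_div_mul_one_div] at hgm'
    have := (one_div_le_one_div (by positivity)
      (hpos m (mem_Ioi.2 hm))).1 hgm'
    linarith
  calc g z ≤ g (m / lam) := step1
    _ ≤ lam * g m := step2
    _ ≤ lam * (g x ^ (1 - α) * g y ^ α) := mul_le_mul_of_nonneg_left step3 hlam0.le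

theorem stmt_19 (g : ℝ → ℝ) (hmono : AntitoneOn g (Set.Ioi 0))
    (hpos : ∀ x ∈ Set.Ioi (0:ℝ), 0 < g x)
    (hconc : ConcaveOn ℝ (Set.Ioi 0) (fun x => 1 / g x))
    (x y s t α : ℝ) (hx : 0 < x) (hy : 0 < y) (hs : 0 < s) (hst : s ≤ t)
    (h1 : s ≤ y / x) (h2 : y / x ≤ t) (hα : α ∈ Set.Icc (0:ℝ) 1) :
    g (x ^ (1 - α) * y ^ α) ≤
      max (((s + 1)^2 / (4 * s)) ^ max α (1 - α)) (((t + 1)^2 / (4 * t)) ^ max α (1 - α)) *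
        (g x ^ (1 - α) * g y ^ α) := by
  exact aux_main g hmono hpos hconc x y s t α hx hy hs hst h1 h2 hα
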